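/- arXiv:1907.12086 — 4 statements merged into one kernel-verified Lean document; each statement's English description precedes it below -/
import Mathlib

section
/- Let m be a positive integer with m ≡ 1 (mod 3), t ∈ F_{2^{3m}} a root of t^3 + t + 1 = 0, and v = a_1 t + a_2 t^2 with a_1, a_2 ∈ F_{2^m}. If v^{1 + 2^m + 2^{2m}} = 1, then a_1^3 + a_2^3 + a_1 a_2^2 + 1 = 0. -/
theorem stmt_9 (m : ℕ) (hm : 0 < m) (hm3 : m % 3 = 1)
    (F : Type*) [Field F] [Fintype F] (hF : Fintype.card F = 2 ^ (3 * m))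
    (t : F) (ht : t ^ 3 + t + 1 = 0)
    (a1 a2 : F) (ha1 : a1 ^ (2 ^ m) = a1) (ha2 : a2 ^ (2 ^ m) = a2)
    (hnorm : (a1 * t + a2 * t ^ 2) ^ (1 + 2 ^ m + 2 ^ (2 * m)) = 1) :
    a1 ^ 3 + a2 ^ 3 + a1 * a2 ^ 2 + 1 = 0 := by
  -- characteristic 2
  have hcard : ((Fintype.card F : ℕ) : F) = 0 := FiniteField.cast_card_eq_zero F
  have h2 : (2 : F) = 0 := by
    rw [hF] at hcard
    push_cast at hcard
    exact pow_eq_zero_iff (by omega) |>.mp hcard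
  -- freshman's dream
  have frob : ∀ (n : ℕ) (x y : F), (x + y) ^ (2 ^ n) = x ^ (2 ^ n) + y ^ (2 ^ n) := by
    intro n
    induction n with
    | zero => intro x y; simp
    | succ n ih =>
      intro x y
      have h : (2 : ℕ) ^ (n + 1) = 2 ^ n * 2 := by rw [pow_succ]
      rw [h, pow_mul, pow_mul, pow_mul, ih]
      linear_combination (x ^ (2 ^ n) * y ^ (2 ^ n)) * h2
  have ht8 : t ^ 8 = t := by
    linear_combination (2 + t - t ^ 2 - t ^ 3 + t ^ 5) * ht + (-1 - 2 * t) * h2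
  have hpk : ∀ j : ℕ, t ^ (8 ^ j) = t := by
    intro j
    induction j with
    | zero => simp
    | succ j ih => rw [pow_succ, pow_mul, ih, ht8]
  obtain ⟨k, hk⟩ : ∃ k, m = 3 * k + 1 := ⟨m / 3, by omega⟩
  have htm : t ^ (2 ^ m) = t ^ 2 := by
    have h : (2 : ℕ) ^ m = 8 ^ k * 2 := by
      rw [hk, pow_succ, pow_mul]; norm_num
    rw [h, pow_mul, hpk k]
  have ht2m : t ^ (2 ^ (2 * m)) = t ^ 4 := by
    have h : (2 : ℕ) ^ (2 * m) = 8 ^ (2 * k) * 4 := by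
      have : 2 * m = 3 * (2 * k) + 2 := by omega
      rw [this, pow_add, pow_mul]; norm_num
    rw [h, pow_mul, hpk (2 * k)]
  have hsq : ∀ x : F, (x ^ 2) ^ (2 ^ (2*m)) = (x ^ (2 ^ (2*m))) ^ 2 := by
    intro x; rw [← pow_mul, mul_comm, pow_mul]
  have hsqm : ∀ x : F, (x ^ 2) ^ (2 ^ m) = (x ^ (2 ^ m)) ^ 2 := by
    intro x; rw [← pow_mul, mul_comm, pow_mul]
  have ha1' : a1 ^ (2 ^ (2 * m)) = a1 := by
    rw [two_mul, pow_add, pow_mul, ha1, ha1]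
  have ha2' : a2 ^ (2 ^ (2 * m)) = a2 := by
    rw [two_mul, pow_add, pow_mul, ha2, ha2]
  rw [pow_add, pow_add, pow_one] at hnorm
  have e1 : (a1 * t + a2 * t ^ 2) ^ (2 ^ m) = a1 * t ^ 2 + a2 * t ^ 4 := by
    rw [frob, mul_pow, mul_pow, ha1, ha2, htm, hsqm, htm]
    ring
  have e2 : (a1 * t + a2 * t ^ 2) ^ (2 ^ (2 * m)) = a1 * t ^ 4 + a2 * t := by
    rw [frob, mul_pow, mul_pow, ha1', ha2', ht2m, hsq, ht2m]
    have : (t ^ 4) ^ 2 = t := by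
      rw [← pow_mul]; norm_num [ht8]
    rw [this]
  rw [e1, e2] at hnorm
  linear_combination hnorm +
    (-a2^3 + a2^3*t + a2^3*t^2 - a2^3*t^4 + 5*a1*a2^2 + a1*a2^2*t - 3*a1*a2^2*t^2 -
      2*a1*a2^2*t^3 + a1*a2^2*t^4 + a1*a2^2*t^5 - a1*a2^2*t^7 - 2*a1^2*a2 - 4*a1^2*a2*t +
      2*a1^2*a2*t^3 + a1^2*a2*t^4 - a1^2*a2*t^5 - a1^2*a2*t^6 - a1^3 + a1^3*t + a1^3*t^2 -
      a1^3*t^4) * ht +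
    (1 + a2^3 - a2^3*t^2 - 2*a1*a2^2 - 3*a1*a2^2*t + a1*a2^2*t^2 + a1^2*a2 + 3*a1^2*a2*t +
      2*a1^2*a2*t^2 + a1^3 - a1^3*t^2) * h2
end

section
/- Let m ≡ 2 (mod 3) be a positive odd integer and take c = 1 ∈ F_{2^m}. Then f(x) = (x^{2^m} + x + δ)^{2^{2m-1} + 2^{m-1}} + x is a permutation polynomial of F_{2^{3m}} for every δ ∈ F_{2^{3m}}. -/
/-- Crux lemma: in a field of char 2, if `w` has trace-type relation and satisfies the
key quadratic relation with a `q`-fixed element `d`, with `2^m ≡ 4 (mod 7)` forced by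
`m % 3 = 2`, then `w = 0`. -/
private lemma crux_16 {F : Type*} [Field F] (m : ℕ) (hm3 : m % 3 = 2)
    (h2 : (2 : F) = 0)
    (frob : ∀ a b : F, (a + b) ^ (2 ^ m) = a ^ (2 ^ m) + b ^ (2 ^ m))
    (d w : F) (hd : d ^ (2 ^ m) = d)
    (htr : (w ^ (2 ^ m)) ^ (2 ^ m) = w ^ (2 ^ m) + w)
    (hkey : (w ^ (2 ^ m)) ^ 2 + d * w ^ (2 ^ m) + d * w = 0) : w = 0 := by
  have hqne : (2 : ℕ) ^ m ≠ 0 := pow_ne_zero m two_ne_zero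
  by_contra hw
  by_cases hd0 : d = 0
  · rw [hd0, zero_mul, zero_mul, add_zero, add_zero] at hkey
    have h1 : w ^ (2 ^ m) = 0 := by
      have := sq_eq_zero_iff.mp hkey
      exact this
    exact hw (pow_eq_zero_iff hqne |>.mp h1)
  · -- d ≠ 0
    have h1 : ((w ^ (2 ^ m)) ^ 2 + d * w ^ (2 ^ m) + d * w) ^ (2 ^ m) = 0 := by
      rw [hkey]; exact zero_pow hqne
    rw [frob, frob, mul_pow, mul_pow, hd, pow_right_comm, htr] at h1
    -- h1 : (w^q + w)^2 + d*(w^q+w) + d*w^q = 0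
    have step1 : d * w ^ (2 ^ m) = w ^ 2 := by
      linear_combination hkey - h1 + (w ^ (2 ^ m) * w + d * w ^ (2 ^ m)) * h2
    have s1q : d * (w ^ (2 ^ m)) ^ (2 ^ m) = (w ^ (2 ^ m)) ^ 2 := by
      have h3 : (d * w ^ (2 ^ m)) ^ (2 ^ m) = (w ^ 2) ^ (2 ^ m) := by rw [step1]
      rw [mul_pow, hd, pow_right_comm w 2 (2 ^ m)] at h3
      exact h3
    have hq4 : w ^ 4 = d ^ 2 * w ^ 2 + d ^ 3 * w := by
      linear_combination (-(w ^ 2 + d * w ^ (2 ^ m) + d ^ 2)) * step1 - d ^ 2 * s1q +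
        d ^ 3 * htr + (w ^ (2 ^ m) * d ^ 3 - w ^ 2 * d ^ 2) * h2
    have hw3 : w ^ 3 = d ^ 2 * w + d ^ 3 := by
      have h4 : w * w ^ 3 = w * (d ^ 2 * w + d ^ 3) := by linear_combination hq4
      exact mul_left_cancel₀ hw h4
    set t : F := w * d⁻¹ with ht
    have htne : t ≠ 0 := mul_ne_zero hw (inv_ne_zero hd0)
    have hinv : d⁻¹ * d = 1 := inv_mul_cancel₀ hd0
    have ht3 : t ^ 3 + t + 1 = 0 := by
      have hd3 : (d : F) ^ 3 ≠ 0 := pow_ne_zero _ hd0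
      have hx : (t ^ 3 + t + 1) * d ^ 3 = 0 := by
        rw [ht]
        linear_combination hw3 + (d ^ 2 * w + d ^ 3) * h2 +
          (w ^ 3 * ((d⁻¹) ^ 2 * d ^ 2 + d⁻¹ * d + 1) + w * d ^ 2) * hinv
      exact (mul_eq_zero.mp hx).resolve_right hd3
    have ht7 : t ^ 7 = 1 := by
      linear_combination (t ^ 4 + t ^ 2 + t + 1) * ht3 -
        (t ^ 5 + t ^ 4 + t ^ 3 + t ^ 2 + t + 1) * h2
    have htq : t ^ (2 ^ m) = t ^ 2 := by
      rw [ht, mul_pow, inv_pow, hd]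
      linear_combination (d⁻¹) ^ 2 * step1 - w ^ (2 ^ m) * d⁻¹ * hinv
    have h7 : 2 ^ m % 7 = 4 := by
      obtain ⟨k, rfl⟩ : ∃ k, m = 3 * k + 2 := ⟨m / 3, by omega⟩
      rw [pow_add, pow_mul, Nat.mul_mod, Nat.pow_mod]
      norm_num
    have htq4 : t ^ (2 ^ m) = t ^ 4 := by
      conv_lhs => rw [show 2 ^ m = 7 * (2 ^ m / 7) + 4 by omega]
      rw [pow_add, pow_mul, ht7, one_pow, one_mul]
    have ht24 : t ^ 2 = t ^ 4 := htq ▸ htq4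
    have hsplit : t ^ 2 * (t + 1) ^ 2 = 0 := by
      linear_combination -ht24 + (t ^ 3 + t ^ 2) * h2
    have ht1 : t = 1 := by
      rcases mul_eq_zero.mp hsplit with h | h
      · exact absurd (pow_eq_zero_iff two_ne_zero |>.mp h) htne
      · have : t + 1 = 0 := pow_eq_zero_iff two_ne_zero |>.mp h
        linear_combination this - h2
    rw [ht1] at ht3
    norm_num at ht3
    exact absurd (by linear_combination ht3 - h2 : (1 : F) = 0) one_ne_zero

theorem stmt_16 (m : ℕ) (hm : 0 < m) (hodd : Odd m) (hm3 : m % 3 = 2)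
    (F : Type*) [Field F] [Fintype F] (hF : Fintype.card F = 2 ^ (3 * m))
    (δ : F) :
    Function.Bijective
      (fun x : F => (x ^ (2 ^ m) + x + δ) ^ (2 ^ (2 * m - 1) + 2 ^ (m - 1)) + x) := by
  -- characteristic 2
  haveI hc : CharP F (ringChar F) := ringChar.charP F
  obtain ⟨n, hprime, hcardp⟩ := FiniteField.card F (ringChar F)
  have hp2 : ringChar F = 2 := by
    have hdvd : ringChar F ∣ 2 ^ (3 * m) := by
      rw [← hF, hcardp]
      exact dvd_pow_self _ (by exact_mod_cast n.ne_zero)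
    have := hprime.dvd_of_dvd_pow hdvd
    exact (Nat.prime_dvd_prime_iff_eq hprime Nat.prime_two).mp this
  haveI : CharP F 2 := hp2 ▸ hc
  haveI : Fact (Nat.Prime 2) := ⟨Nat.prime_two⟩
  have h2 : (2 : F) = 0 := CharTwo.two_eq_zero
  have frob : ∀ a b : F, (a + b) ^ (2 ^ m) = a ^ (2 ^ m) + b ^ (2 ^ m) := fun a b =>
    add_pow_char_pow ..
  have key : 2 ^ m * 2 ^ m * 2 ^ m = Fintype.card F := by
    rw [hF, ← pow_add, ← pow_add]
    congr 1
    ring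
  have F3 : ∀ x : F, ((x ^ (2 ^ m)) ^ (2 ^ m)) ^ (2 ^ m) = x := fun x => by
    calc ((x ^ (2 ^ m)) ^ (2 ^ m)) ^ (2 ^ m) = x ^ (2 ^ m * 2 ^ m * 2 ^ m) := by
          rw [pow_mul, pow_mul]
      _ = x := by rw [key, FiniteField.pow_card]
  set q : ℕ := 2 ^ m with hq
  set e : ℕ := 2 ^ (2 * m - 1) + 2 ^ (m - 1) with he
  have he2 : e * 2 = q * q + q := by
    rw [he, hq]
    obtain ⟨m', rfl⟩ : ∃ m', m = m' + 1 := ⟨m - 1, by omega⟩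
    have h1 : 2 * (m' + 1) - 1 = 2 * m' + 1 := by omega
    have h2' : m' + 1 - 1 = m' := by omega
    rw [h1, h2', ← pow_add]
    ring
  have sqe : ∀ y : F, (y ^ e) ^ 2 = (y ^ q) ^ q * y ^ q := fun y => by
    rw [← pow_mul, he2, pow_add, pow_mul]
  -- trace of δ
  set d : F := (δ ^ q) ^ q + δ ^ q + δ with hd
  have hdq : d ^ q = d := by
    rw [hd, frob, frob, F3]
    ring
  -- trace relation for y = x^q + x + δ
  have trace : ∀ x : F, ((x ^ q + x + δ) ^ q) ^ q = (x ^ q + x + δ) ^ q + (x ^ q + x + δ) + d := by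
    intro x
    rw [frob, frob, frob, frob, F3, hd]
    linear_combination (-(x ^ q) - δ - δ ^ q) * h2
  -- squared h identity
  have hones : ∀ y : F, ((y ^ e) ^ q + y ^ e + y) ^ 2 =
      y * (y ^ q) ^ q + (y ^ q) ^ q * y ^ q + y ^ 2 := by
    intro y
    have e1 : (y ^ e) ^ 2 = (y ^ q) ^ q * y ^ q := sqe y
    have e2 : ((y ^ e) ^ q) ^ 2 = y * (y ^ q) ^ q := by
      rw [pow_right_comm, e1, mul_pow, F3]
    linear_combination e2 + e1 +
      ((y ^ e) ^ q * y ^ e + (y ^ e) ^ q * y + y ^ e * y) * h2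
  rw [← Finite.injective_iff_bijective]
  intro x1 x2 h
  simp only at h
  set y1 : F := x1 ^ q + x1 + δ with hy1
  set y2 : F := x2 ^ q + x2 + δ with hy2
  -- h : y1 ^ e + x1 = y2 ^ e + x2
  have h1 : (y1 ^ e + x1) ^ q = (y2 ^ e + x2) ^ q := by rw [h]
  rw [frob, frob] at h1
  have hC : (y1 ^ e) ^ q + y1 ^ e + y1 = (y2 ^ e) ^ q + y2 ^ e + y2 := by
    linear_combination h1 + h + hy1 - hy2
  have hD : y1 * (y1 ^ q) ^ q + (y1 ^ q) ^ q * y1 ^ q + y1 ^ 2 =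
      y2 * (y2 ^ q) ^ q + (y2 ^ q) ^ q * y2 ^ q + y2 ^ 2 := by
    rw [← hones y1, ← hones y2, hC]
  have B1 : (y1 ^ q) ^ q = y1 ^ q + y1 + d := by rw [hy1]; exact trace x1
  have B2 : (y2 ^ q) ^ q = y2 ^ q + y2 + d := by rw [hy2]; exact trace x2
  rw [B1, B2] at hD
  -- set w
  have htr : ((y1 + y2) ^ q) ^ q = (y1 + y2) ^ q + (y1 + y2) := by
    rw [frob, frob, B1, B2, frob]
    linear_combination d * h2
  have hkey : ((y1 + y2) ^ q) ^ 2 + d * (y1 + y2) ^ q + d * (y1 + y2) = 0 := by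
    rw [frob]
    linear_combination hD + (y1 ^ q * y2 ^ q + y2 ^ q * y2 ^ q + d * y2 ^ q + d * y2 +
      y2 * y2 ^ q + y2 ^ 2 - y1 * y1 ^ q - y1 ^ 2) * h2
  have hw0 : y1 + y2 = 0 := crux_16 m hm3 h2 frob d (y1 + y2) hdq htr hkey
  have hy12 : y1 = y2 := by linear_combination hw0 - y2 * h2
  rw [hy12] at h
  exact add_left_cancel h
end

section
/- Let m be a positive integer and α, β ∈ F_{2^m}^*. The cubic x^3 + αx + β has exactly one root in F_{2^m} if and only if Tr_{F_{2^m}/F_2}(1 + α^3 β^{-2}) = 1. -/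
open Finset Polynomial

private def trS {K : Type*} [Field K] (n : ℕ) (c : K) : K :=
  ∑ i ∈ Finset.range n, c ^ 2 ^ i

section Aux

variable {K : Type*} [Field K] [Fintype K] {n : ℕ}

omit [Fintype K] in
lemma two_eq_zero [CharP K 2] : (2 : K) = 0 := by
  exact_mod_cast CharP.cast_eq_zero K 2

lemma charTwoAux (hn : 0 < n) (hK : Fintype.card K = 2 ^ n) : CharP K 2 := by
  have h0 := FiniteField.cast_card_eq_zero K
  rw [hK] at h0
  push_cast at h0
  have h2 : (2 : K) = 0 := by
    have := pow_eq_zero_iff (n := n) hn.ne' |>.mp h0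
    exact_mod_cast this
  exact (CharP.charP_iff_prime_eq_zero Nat.prime_two).mpr h2

lemma trS_fix (hK : Fintype.card K = 2 ^ n) (c : K) : c ^ 2 ^ n = c := by
  rw [← hK]; exact FiniteField.pow_card c

omit [Fintype K] in
lemma trS_add [CharP K 2] (c d : K) : trS n (c + d) = trS n c + trS n d := by
  simp only [trS, ← Finset.sum_add_distrib]
  exact Finset.sum_congr rfl fun i _ => add_pow_char_pow c d 2 i

lemma trS_sq [CharP K 2] (hK : Fintype.card K = 2 ^ n) (c : K) :
    trS n (c ^ 2) = trS n c := by
  have key : ∀ i, (c ^ 2) ^ 2 ^ i = c ^ 2 ^ (i + 1) := fun i => by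
    rw [← pow_mul, ← pow_succ']
  have h1 : trS n (c ^ 2) + c ^ 2 ^ 0 = trS n c + c ^ 2 ^ n := by
    simp only [trS, key]
    rw [← Finset.sum_range_succ' (fun i => c ^ 2 ^ i) n, Finset.sum_range_succ]
  rw [pow_zero, pow_one, trS_fix hK] at h1
  exact add_right_cancel h1

omit [Fintype K] in
lemma trS_pow_two [CharP K 2] (c : K) : trS n c ^ 2 = trS n (c ^ 2) := by
  rw [trS, trS, sum_pow_char]
  exact Finset.sum_congr rfl fun i _ => by rw [← pow_mul, ← pow_mul, mul_comm]

lemma trS_dichotomy [CharP K 2] (hK : Fintype.card K = 2 ^ n) (c : K) :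
    trS n c = 0 ∨ trS n c = 1 := by
  have h : trS n c ^ 2 = trS n c := by rw [trS_pow_two, trS_sq hK]
  have h2 : trS n c * (trS n c - 1) = 0 := by linear_combination h
  rcases mul_eq_zero.mp h2 with h3 | h3
  · exact Or.inl h3
  · exact Or.inr (by linear_combination h3)

lemma trS_AS_zero [CharP K 2] (hK : Fintype.card K = 2 ^ n) (u : K) :
    trS n (u ^ 2 + u) = 0 := by
  rw [trS_add, trS_sq hK, CharTwo.add_self_eq_zero]

omit [Fintype K] in
lemma trS_period {a b : ℕ} {c : K} (hfix : c ^ 2 ^ a = c) :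
    trS (a + b) c = trS a c + trS b c := by
  rw [trS, trS, trS, Finset.sum_range_add]
  congr 1
  exact Finset.sum_congr rfl fun i _ => by rw [pow_add, pow_mul, hfix]

lemma exists_trS_one [CharP K 2] (hn : 0 < n) (hK : Fintype.card K = 2 ^ n) :
    ∃ c : K, trS n c = 1 := by
  by_contra hno
  push_neg at hno
  have hzero : ∀ c : K, trS n c = 0 := fun c =>
    (trS_dichotomy hK c).resolve_right (hno c)
  set P : K[X] := ∑ i ∈ Finset.range n, X ^ 2 ^ i with hP
  have hdeg : P.natDegree ≤ 2 ^ (n - 1) :=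
    Polynomial.natDegree_sum_le_of_forall_le _ _ fun i hi => by
      rw [Polynomial.natDegree_X_pow]
      exact Nat.pow_le_pow_right (by norm_num) (Nat.le_pred_of_lt (Finset.mem_range.mp hi))
  have hlt : P.natDegree < Fintype.card K := by
    rw [hK]
    exact lt_of_le_of_lt hdeg (Nat.pow_lt_pow_right one_lt_two (Nat.pred_lt hn.ne'))
  have hPzero : P = 0 := by
    apply Polynomial.eq_zero_of_natDegree_lt_card_of_eval_eq_zero P Function.injective_id _ hlt
    intro x
    have he : P.eval x = trS n x := by
      rw [hP, Polynomial.eval_finset_sum, trS]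
      exact Finset.sum_congr rfl fun i _ => by rw [Polynomial.eval_pow, Polynomial.eval_X]
    rw [id, he, hzero]
  have hcoeff : P.coeff 1 = 1 := by
    rw [hP, Polynomial.finset_sum_coeff]
    rw [Finset.sum_eq_single 0]
    · simp
    · intro i hi hne
      rw [Polynomial.coeff_X_pow, if_neg]
      intro h
      exact (Nat.one_lt_two_pow_iff.mpr hne).ne' h.symm
    · intro h
      exact absurd (Finset.mem_range.mpr hn) h
  rw [hPzero] at hcoeff
  simp at hcoeff

lemma AS_surj [CharP K 2] (hn : 0 < n) (hK : Fintype.card K = 2 ^ n) {c : K}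
    (hc : trS n c = 0) : ∃ u : K, u ^ 2 + u = c := by
  classical
  have h2 : (2 : K) = 0 := two_eq_zero
  obtain ⟨c₀, hc₀⟩ := exists_trS_one hn hK
  set T0 : Finset K := Finset.univ.filter (fun x => trS n x = 0) with hT0
  set T1 : Finset K := Finset.univ.filter (fun x => trS n x = 1) with hT1
  have hdisj : Disjoint T0 T1 := by
    rw [Finset.disjoint_left]
    intro x hx0 hx1
    rw [hT0, Finset.mem_filter] at hx0
    rw [hT1, Finset.mem_filter] at hx1
    rw [hx0.2] at hx1
    exact zero_ne_one hx1.2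
  have hunion : T0 ∪ T1 = Finset.univ := by
    ext x
    simp only [hT0, hT1, Finset.mem_union, Finset.mem_filter, Finset.mem_univ, true_and,
      iff_true]
    exact trS_dichotomy hK x
  have hcard01 : T0.card + T1.card = 2 ^ n := by
    rw [← Finset.card_union_of_disjoint hdisj, hunion, Finset.card_univ, hK]
  have hbij : T0.card = T1.card := by
    apply Finset.card_bij (fun x _ => x + c₀)
    · intro x hx
      rw [hT0, Finset.mem_filter] at hx
      rw [hT1, Finset.mem_filter]
      refine ⟨Finset.mem_univ _, ?_⟩
      rw [trS_add, hx.2, hc₀, zero_add]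
    · intro x _ y _ h
      exact add_right_cancel h
    · intro y hy
      rw [hT1, Finset.mem_filter] at hy
      refine ⟨y + c₀, ?_, ?_⟩
      · rw [hT0, Finset.mem_filter]
        refine ⟨Finset.mem_univ _, ?_⟩
        rw [trS_add, hy.2, hc₀]
        exact CharTwo.add_self_eq_zero 1
      · rw [add_assoc, CharTwo.add_self_eq_zero, add_zero]
  set I : Finset K := Finset.univ.image (fun u : K => u ^ 2 + u) with hI
  have hIsub : I ⊆ T0 := by
    intro y hy
    obtain ⟨u, -, rfl⟩ := Finset.mem_image.mp hy
    rw [hT0, Finset.mem_filter]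
    exact ⟨Finset.mem_univ _, trS_AS_zero hK u⟩
  have hfib : ∀ y ∈ I, (Finset.univ.filter (fun u : K => u ^ 2 + u = y)).card = 2 := by
    intro y hy
    obtain ⟨u₀, -, rfl⟩ := Finset.mem_image.mp hy
    have hset : Finset.univ.filter (fun u : K => u ^ 2 + u = u₀ ^ 2 + u₀) = {u₀, u₀ + 1} := by
      ext u
      simp only [Finset.mem_filter, Finset.mem_univ, true_and, Finset.mem_insert,
        Finset.mem_singleton]
      constructor
      · intro h
        have h4 : (u - u₀) * (u - (u₀ + 1)) = 0 := by
          linear_combination h + (u₀ ^ 2 + u₀ - u * u₀ - u) * h2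
        rcases mul_eq_zero.mp h4 with h5 | h5
        · exact Or.inl (sub_eq_zero.mp h5)
        · exact Or.inr (sub_eq_zero.mp h5)
      · rintro (rfl | rfl)
        · rfl
        · linear_combination (u₀ + 1) * h2
    rw [hset, Finset.card_insert_of_notMem, Finset.card_singleton]
    rw [Finset.mem_singleton]
    intro h
    have h1 : (1 : K) = 0 := by linear_combination -h
    exact one_ne_zero h1
  have hcardK : (2 : ℕ) ^ n = ∑ _y ∈ I, 2 := by
    rw [← hK, ← Finset.card_univ,
      Finset.card_eq_sum_card_image (fun u : K => u ^ 2 + u) Finset.univ]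
    exact Finset.sum_congr rfl hfib
  have hpow : (2 : ℕ) ^ n = 2 * 2 ^ (n - 1) := by
    rw [← pow_succ']
    congr 1
    omega
  have hIcard : I.card = 2 ^ (n - 1) := by
    rw [Finset.sum_const, smul_eq_mul] at hcardK
    omega
  have hT0card : T0.card = 2 ^ (n - 1) := by omega
  have hEq : I = T0 := Finset.eq_of_subset_of_card_le hIsub (by rw [hIcard, hT0card])
  have hcmem : c ∈ T0 := by
    rw [hT0, Finset.mem_filter]
    exact ⟨Finset.mem_univ _, hc⟩
  rw [← hEq] at hcmem
  obtain ⟨u, -, hu⟩ := Finset.mem_image.mp hcmem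
  exact ⟨u, hu⟩

omit [Fintype K] in
lemma cubic_factor [CharP K 2] {α β r : K} (hr : r ^ 3 + α * r + β = 0) (x : K) :
    x ^ 3 + α * x + β = (x + r) * (x ^ 2 + r * x + (r ^ 2 + α)) := by
  have h2 : (2 : K) = 0 := two_eq_zero
  linear_combination hr - (r * x ^ 2 + r ^ 2 * x + r ^ 3 + α * r) * h2

omit [Fintype K] in
lemma quad_root_iff [CharP K 2] {r γ : K} (hr : r ≠ 0) :
    (∃ x : K, x ^ 2 + r * x + (r ^ 2 + γ) = 0) ↔ ∃ u : K, u ^ 2 + u = 1 + γ * r⁻¹ ^ 2 := by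
  have h2 : (2 : K) = 0 := two_eq_zero
  constructor
  · rintro ⟨x, hx⟩
    refine ⟨x * r⁻¹, ?_⟩
    field_simp
    linear_combination hx - (r ^ 2 + γ) * h2
  · rintro ⟨u, hu⟩
    refine ⟨r * u, ?_⟩
    field_simp at hu
    linear_combination hu + (r ^ 2 + γ) * h2

lemma key_lemma (hn : 0 < n)
    (hK : Fintype.card K = 2 ^ n) {α β r : K} (hα : α ≠ 0) (hβ : β ≠ 0)
    (hr : r ^ 3 + α * r + β = 0) :
    trS n (1 + α ^ 3 * β⁻¹ ^ 2) = 1 ↔ ¬∃ x : K, x ^ 2 + r * x + (r ^ 2 + α) = 0 := by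
  haveI := charTwoAux hn hK
  have h2 : (2 : K) = 0 := two_eq_zero
  have hr0 : r ≠ 0 := by
    rintro rfl
    apply hβ
    linear_combination hr
  have hid : (1 + α ^ 3 * β⁻¹ ^ 2) = (1 + α * r⁻¹ ^ 2) + ((α * r * β⁻¹) ^ 2 + α * r * β⁻¹) := by
    field_simp
    linear_combination (α ^ 2 * r - α * β) * hr - (α ^ 2 * r ^ 4) * h2
  have htr : trS n (1 + α ^ 3 * β⁻¹ ^ 2) = trS n (1 + α * r⁻¹ ^ 2) := by
    rw [hid, trS_add, trS_AS_zero hK, add_zero]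
  rw [htr, quad_root_iff hr0 (γ := α)]
  constructor
  · rintro h1 ⟨u, hu⟩
    have h0 := trS_AS_zero hK u
    rw [hu, h1] at h0
    exact one_ne_zero h0
  · intro hne
    rcases trS_dichotomy hK (1 + α * r⁻¹ ^ 2) with h0 | h1
    · exact absurd (AS_surj hn hK h0) hne
    · exact h1

omit [Fintype K] in
lemma trS_map {L : Type*} [Field L] (f : K →+* L) (k : ℕ) (c : K) :
    trS k (f c) = f (trS k c) := by
  rw [trS, trS, map_sum]
  exact Finset.sum_congr rfl fun i _ => (map_pow f c _).symm

end Aux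

theorem stmt_18 (m : ℕ) (hm : 0 < m)
    (F : Type*) [Field F] [Fintype F] (hF : Fintype.card F = 2 ^ m)
    (α β : F) (hα : α ≠ 0) (hβ : β ≠ 0) :
    (∃! x : F, x ^ 3 + α * x + β = 0) ↔
    (∑ i ∈ Finset.range m, (1 + α ^ 3 * β⁻¹ ^ 2) ^ (2 ^ i)) = 1 := by
  haveI := charTwoAux hm hF
  have h2 : (2 : F) = 0 := two_eq_zero
  show (∃! x : F, x ^ 3 + α * x + β = 0) ↔ trS m (1 + α ^ 3 * β⁻¹ ^ 2) = 1
  by_cases hroot : ∃ r : F, r ^ 3 + α * r + β = 0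
  · obtain ⟨r, hr⟩ := hroot
    rw [key_lemma hm hF hα hβ hr]
    constructor
    · rintro ⟨x₀, hx₀, huniq⟩ ⟨s, hs⟩
      have hscube : s ^ 3 + α * s + β = 0 := by
        rw [cubic_factor hr s, hs, mul_zero]
      have hsr : s ≠ r := by
        rintro rfl
        have hαr : α = s ^ 2 := by linear_combination -hs + (α + s ^ 2) * h2
        apply hβ
        rw [hαr] at hr
        linear_combination hr - s ^ 3 * h2
      exact hsr (by rw [huniq s hscube, huniq r hr])
    · intro hq
      refine ⟨r, hr, fun y hy => ?_⟩
      have hf := cubic_factor hr y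
      rw [hy] at hf
      rcases mul_eq_zero.mp hf.symm with h | h
      · linear_combination h - r * h2
      · exact absurd ⟨y, h⟩ hq
  · constructor
    · rintro ⟨x, hx, -⟩
      exact absurd ⟨x, hx⟩ hroot
    · intro h1
      exfalso
      -- build the cubic extension
      set p : F[X] := X ^ 3 + C α * X + C β with hp
      have hdegp : p.natDegree = 3 := by
        rw [hp]
        compute_degree!
      have hp0 : p ≠ 0 := fun h => by simp [h] at hdegp
      have hirr : Irreducible p := by
        rw [Polynomial.irreducible_iff_roots_eq_zero_of_degree_le_three (by omega) (by omega)]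
        by_contra hroots
        obtain ⟨x, hx⟩ := Multiset.exists_mem_of_ne_zero hroots
        rw [Polynomial.mem_roots hp0] at hx
        apply hroot
        refine ⟨x, ?_⟩
        have := hx
        rw [hp] at this
        simpa using this
      haveI : Fact (Irreducible p) := ⟨hirr⟩
      set K := AdjoinRoot p with hKdef
      set pb := AdjoinRoot.powerBasis hp0 with hpb
      haveI : Fintype K := Module.fintypeOfFintype pb.basis
      have hm3 : 0 < m * 3 := by omega
      have hcardK : Fintype.card K = 2 ^ (m * 3) := by
        rw [Module.card_fintype pb.basis, hF, Fintype.card_fin]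
        have hdim : pb.dim = 3 := by rw [hpb, AdjoinRoot.powerBasis_dim, hdegp]
        rw [hdim, ← pow_mul]
      haveI : CharP K 2 := charTwoAux hm3 hcardK
      have h2K : (2 : K) = 0 := two_eq_zero
      set ι : F →+* K := AdjoinRoot.of p with hι
      have hιinj : Function.Injective ι := ι.injective
      set r : K := AdjoinRoot.root p with hrdef
      have hr : r ^ 3 + ι α * r + ι β = 0 := by
        have h := AdjoinRoot.eval₂_root p
        rw [hp] at h
        simpa using h
      have hαK : ι α ≠ 0 := fun h => hα (hιinj (by rw [h, map_zero]))
      have hβK : ι β ≠ 0 := fun h => hβ (hιinj (by rw [h, map_zero]))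
      have hfixF : ∀ a : F, (ι a) ^ 2 ^ m = ι a := fun a => by
        rw [← map_pow]
        congr 1
        exact trS_fix hF a
      have hrnot : ∀ a : F, ι a ≠ r := by
        intro a ha
        apply hroot
        refine ⟨a, hιinj ?_⟩
        rw [map_add, map_add, map_mul, map_pow, map_zero, ha]
        exact hr
      have hx2ne : r ^ 2 ^ m ≠ r := by
        intro hfix
        set s : Finset K := insert r (Finset.univ.image ι) with hs
        have hcards : s.card = 2 ^ m + 1 := by
          rw [hs, Finset.card_insert_of_notMem, Finset.card_image_of_injective _ hιinj,
            Finset.card_univ, hF]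
          intro hmem
          obtain ⟨a, -, ha⟩ := Finset.mem_image.mp hmem
          exact hrnot a ha
        set g : K[X] := X ^ 2 ^ m - X with hg
        have hgdeg : g.natDegree ≤ 2 ^ m := by
          rw [hg]
          refine le_trans (Polynomial.natDegree_sub_le _ _) ?_
          rw [Polynomial.natDegree_X_pow, Polynomial.natDegree_X]
          have : 1 ≤ 2 ^ m := Nat.one_le_two_pow
          omega
        have hgne : g ≠ 0 := by
          intro h0
          have hc := congrArg (fun q => Polynomial.coeff q (2 ^ m)) h0
          have h2m : ¬(1 = 2 ^ m) := fun h => (Nat.one_lt_two_pow_iff.mpr hm.ne').ne h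
          simp [hg, Polynomial.coeff_X_pow, Polynomial.coeff_X, h2m] at hc
        apply hgne
        apply Polynomial.eq_zero_of_natDegree_lt_card_of_eval_eq_zero' g s
        · intro i hi
          rw [hg]
          simp only [Polynomial.eval_sub, Polynomial.eval_pow, Polynomial.eval_X, sub_eq_zero]
          rcases Finset.mem_insert.mp hi with hri | hi'
          · rw [hri]; exact hfix
          · obtain ⟨a, -, rfl⟩ := Finset.mem_image.mp hi'
            exact hfixF a
        · rw [hcards]
          omega
      have hx2root : (r ^ 2 ^ m) ^ 3 + ι α * r ^ 2 ^ m + ι β = 0 := by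
        have h0 : (r ^ 3 + ι α * r + ι β) ^ 2 ^ m = 0 := by
          rw [hr]
          exact zero_pow (by positivity)
        rw [add_pow_char_pow, add_pow_char_pow, mul_pow, hfixF α, hfixF β] at h0
        rw [pow_right_comm] at h0
        exact h0
      have hquad : ∃ x : K, x ^ 2 + r * x + (r ^ 2 + ι α) = 0 := by
        refine ⟨r ^ 2 ^ m, ?_⟩
        have hf := cubic_factor hr (r ^ 2 ^ m)
        rw [hx2root] at hf
        rcases mul_eq_zero.mp hf.symm with h | h
        · exfalso
          apply hx2ne
          linear_combination h - r * h2K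
        · exact h
      have hkey := key_lemma hm3 hcardK hαK hβK hr
      have htrK : trS (m * 3) (1 + (ι α) ^ 3 * (ι β)⁻¹ ^ 2) = 0 := by
        rcases trS_dichotomy hcardK (1 + (ι α) ^ 3 * (ι β)⁻¹ ^ 2) with h | h
        · exact h
        · exact absurd hquad (hkey.mp h)
      have hcast : ι (1 + α ^ 3 * β⁻¹ ^ 2) = 1 + (ι α) ^ 3 * (ι β)⁻¹ ^ 2 := by
        rw [map_add, map_one, map_mul, map_pow, map_pow, map_inv₀]
      have hfixc := hfixF (1 + α ^ 3 * β⁻¹ ^ 2)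
      have hper : trS (m * 3) (ι (1 + α ^ 3 * β⁻¹ ^ 2)) = ι (trS m (1 + α ^ 3 * β⁻¹ ^ 2)) := by
        have e : m * 3 = m + (m + m) := by ring
        rw [e, trS_period hfixc, trS_period hfixc, trS_map]
        rw [CharTwo.add_self_eq_zero, add_zero]
      rw [hcast, htrK] at hper
      have hzero : trS m (1 + α ^ 3 * β⁻¹ ^ 2) = 0 := by
        apply hιinj
        rw [map_zero, ← hper]
      rw [hzero] at h1
      exact zero_ne_one h1
end

section
/- Let m be a positive integer and α, β ∈ F_{2^m}^* such that α is a square and α^{3/2} is defined (every element of F_{2^m} has a unique square root). The cubic x^3 + αx + β has three distinct roots in F_{2^m} if and only if p_m(β/α^{3/2}) = 0, where p_1(x) = p_2(x) = x and p_k(x) = p_{k-1}(x) + x^{2^{k-3}} p_{k-2}(x) for k ≥ 3. -/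
/-- The Berlekamp–Rumsey–Solomon polynomials `p_k` over `F_2`:
`p_1 = p_2 = X`, `p_k = p_{k-1} + X^{2^{k-3}} p_{k-2}` for `k ≥ 3`. -/
noncomputable def brsP : ℕ → Polynomial (ZMod 2)
  | 0 => 0
  | 1 => Polynomial.X
  | 2 => Polynomial.X
  | k + 3 => brsP (k + 2) + Polynomial.X ^ (2 ^ k) * brsP (k + 1)

section Helpers

variable {K : Type*} [Field K] [CharP K 2]

lemma two0 : (2 : K) = 0 := by exact_mod_cast CharP.cast_eq_zero K 2

lemma char2_eq_of_add_eq_zero {x y : K} (h : x + y = 0) : x = y := by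
  linear_combination h - y * (two0 (K := K))

lemma brs_rec (k : ℕ) :
    brsP (k + 3) = brsP (k + 2) + Polynomial.X ^ (2 ^ k) * brsP (k + 1) := by
  rfl

lemma brs_eval (φ : ZMod 2 →+* K) (c a b : K)
    (h1 : a ^ 3 + a + c = 0) (h2 : b ^ 3 + b + c = 0) (h3 : a * b * (a + b) = c) :
    ∀ k : ℕ, (brsP (k + 1)).eval₂ φ c
      = (b ^ 2 + b) * a ^ 2 ^ k + (a ^ 2 + a) * b ^ 2 ^ k := by
  have two0' : (2 : K) = 0 := two0
  have key : ∀ x : K, x ^ 3 + x + c = 0 →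
      ∀ n : ℕ, x ^ 2 ^ (n + 2) = x ^ 2 ^ (n + 1) + c ^ 2 ^ n * x ^ 2 ^ n := by
    intro x hx n
    have hx4 : x ^ 4 = x ^ 2 + c * x := by
      linear_combination x * hx + (-(x * c) - x ^ 2) * two0'
    have e1 : (2 : ℕ) ^ (n + 2) = 4 * 2 ^ n := by ring
    have e2 : (2 : ℕ) ^ (n + 1) = 2 * 2 ^ n := by ring
    rw [e1, e2, pow_mul, pow_mul, hx4, add_pow_char_pow, mul_pow]
  have base0 : (brsP 1).eval₂ φ c = (b ^ 2 + b) * a ^ 2 ^ 0 + (a ^ 2 + a) * b ^ 2 ^ 0 := by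
    show Polynomial.X.eval₂ φ c = _
    rw [Polynomial.eval₂_X]
    linear_combination -h3 - (a * b) * two0'
  have base1 : (brsP 2).eval₂ φ c = (b ^ 2 + b) * a ^ 2 ^ 1 + (a ^ 2 + a) * b ^ 2 ^ 1 := by
    show Polynomial.X.eval₂ φ c = _
    rw [Polynomial.eval₂_X]
    linear_combination -h3 - (a ^ 2 * b ^ 2) * two0'
  have main : ∀ k : ℕ,
      ((brsP (k + 1)).eval₂ φ c = (b ^ 2 + b) * a ^ 2 ^ k + (a ^ 2 + a) * b ^ 2 ^ k) ∧
      ((brsP (k + 2)).eval₂ φ c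
        = (b ^ 2 + b) * a ^ 2 ^ (k + 1) + (a ^ 2 + a) * b ^ 2 ^ (k + 1)) := by
    intro k
    induction k with
    | zero => exact ⟨base0, base1⟩
    | succ n ih =>
      refine ⟨ih.2, ?_⟩
      rw [brs_rec, Polynomial.eval₂_add, Polynomial.eval₂_mul, Polynomial.eval₂_X_pow,
        ih.1, ih.2, key a h1 n, key b h2 n]
      ring
  exact fun k => (main k).1

end Helpers

section FP
variable {F K : Type*} [Field F] [Fintype F] [Field K] [CharP K 2] [Algebra F K]

lemma fixed_point (m : ℕ) (hm : 0 < m) (hF : Fintype.card F = 2 ^ m)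
    (x : K) (hx : x ^ 2 ^ m = x) : ∃ u : F, algebraMap F K u = x := by
  classical
  set P : Polynomial K := Polynomial.X ^ 2 ^ m + Polynomial.X with hP
  have h1 : 1 < 2 ^ m := Nat.one_lt_two_pow (by omega)
  have hdeg : P.natDegree = 2 ^ m := by
    rw [hP]
    compute_degree
    · rw [if_neg (by omega)]
      norm_num
    · omega
  have hP0 : P ≠ 0 := by
    intro h
    rw [h, Polynomial.natDegree_zero] at hdeg
    omega
  have hinj := (algebraMap F K).injective
  set E := Finset.univ.image (algebraMap F K) with hE
  have cardE : E.card = 2 ^ m := by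
    rw [hE, Finset.card_image_of_injective _ hinj, Finset.card_univ, hF]
  have hsub : E ⊆ P.roots.toFinset := by
    intro y hy
    obtain ⟨t, -, rfl⟩ := Finset.mem_image.mp hy
    rw [Multiset.mem_toFinset, Polynomial.mem_roots hP0]
    have ht : (t : F) ^ 2 ^ m = t := by rw [← hF, FiniteField.pow_card]
    show P.IsRoot _
    rw [hP]
    simp only [Polynomial.IsRoot, Polynomial.eval_add, Polynomial.eval_pow, Polynomial.eval_X]
    rw [← map_pow, ht]
    linear_combination (algebraMap F K t) * (two0 (K := K))
  have hcard : P.roots.toFinset.card ≤ 2 ^ m :=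
    le_trans (Multiset.toFinset_card_le _) (le_trans (Polynomial.card_roots' P) (le_of_eq hdeg))
  have hEq : E = P.roots.toFinset :=
    Finset.eq_of_subset_of_card_le hsub (by rw [cardE]; exact hcard)
  have hxr : x ∈ P.roots.toFinset := by
    rw [Multiset.mem_toFinset, Polynomial.mem_roots hP0]
    show P.IsRoot _
    rw [hP]
    simp only [Polynomial.IsRoot, Polynomial.eval_add, Polynomial.eval_pow, Polynomial.eval_X]
    rw [hx]
    linear_combination x * (two0 (K := K))
  rw [← hEq] at hxr
  obtain ⟨u, -, hu⟩ := Finset.mem_image.mp hxr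
  exact ⟨u, hu⟩

end FP

lemma core (m : ℕ) (hm : 0 < m) (F : Type*) [Field F] [Fintype F] [CharP F 2]
    (hF : Fintype.card F = 2 ^ m) (c : F) (hc : c ≠ 0) :
    (∃ x y z : F, x ≠ y ∧ x ≠ z ∧ y ≠ z ∧
      x ^ 3 + x + c = 0 ∧ y ^ 3 + y + c = 0 ∧ z ^ 3 + z + c = 0) ↔
    Polynomial.eval₂ (ZMod.castHom (dvd_refl 2) F) c (brsP m) = 0 := by
  obtain ⟨n, rfl⟩ : ∃ n, m = n + 1 := ⟨m - 1, by omega⟩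
  have twoF : (2 : F) = 0 := two0
  constructor
  · rintro ⟨x, y, z, hxy, hxz, hyz, hx, hy, hz⟩
    have hxy0 : x + y ≠ 0 := fun h => hxy (char2_eq_of_add_eq_zero h)
    have hxz0 : x + z ≠ 0 := fun h => hxz (char2_eq_of_add_eq_zero h)
    have hqxy : x ^ 2 + x * y + y ^ 2 + 1 = 0 := by
      have hprod : (x + y) * (x ^ 2 + x * y + y ^ 2 + 1) = 0 := by
        linear_combination hx - hy + (x ^ 2 * y + x * y ^ 2 + y ^ 3 + y) * twoF
      exact (mul_eq_zero.mp hprod).resolve_left hxy0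
    have hqxz : x ^ 2 + x * z + z ^ 2 + 1 = 0 := by
      have hprod : (x + z) * (x ^ 2 + x * z + z ^ 2 + 1) = 0 := by
        linear_combination hx - hz + (x ^ 2 * z + x * z ^ 2 + z ^ 3 + z) * twoF
      exact (mul_eq_zero.mp hprod).resolve_left hxz0
    have hsum : (y + z) * (x + y + z) = 0 := by
      linear_combination hqxy - hqxz + (x * z + z ^ 2 + y * z) * twoF
    have hyz0 : y + z ≠ 0 := fun h => hyz (char2_eq_of_add_eq_zero h)
    have hszero : x + y + z = 0 := (mul_eq_zero.mp hsum).resolve_left hyz0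
    have h3 : x * y * (x + y) = c := by
      linear_combination hx + x * hqxy + (-c - x - x ^ 3) * twoF
    have hform := brs_eval (ZMod.castHom (dvd_refl 2) F) c x y hx hy h3 n
    rw [hform]
    have hu : (x ^ 2 ^ n) ^ 2 = x := by
      rw [← pow_mul, ← pow_succ, ← hF, FiniteField.pow_card]
    have hv : (y ^ 2 ^ n) ^ 2 = y := by
      rw [← pow_mul, ← pow_succ, ← hF, FiniteField.pow_card]
    have hsq : ((y ^ 2 + y) * x ^ 2 ^ n + (x ^ 2 + x) * y ^ 2 ^ n) ^ 2
        = (y ^ 2 + y) ^ 2 * ((x ^ 2 ^ n) ^ 2) + (x ^ 2 + x) ^ 2 * ((y ^ 2 ^ n) ^ 2) := by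
      linear_combination ((y ^ 2 + y) * (x ^ 2 + x) * x ^ 2 ^ n * y ^ 2 ^ n) * twoF
    rw [hu, hv] at hsq
    have h0 : (y ^ 2 + y) ^ 2 * x + (x ^ 2 + x) ^ 2 * y = 0 := by
      linear_combination x * y * hx + x * y * hy + (-(x * y * c) + x * y ^ 3 + x ^ 3 * y) * twoF
    exact (pow_eq_zero_iff (two_ne_zero)).mp (hsq.trans h0)
  · intro hq
    set K := AlgebraicClosure F with hK
    haveI : CharP K 2 := charP_of_injective_algebraMap (algebraMap F K).injective 2
    have twoK : (2 : K) = 0 := two0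
    have hinj := (algebraMap F K).injective
    set c' := algebraMap F K c with hc'def
    have hc' : c' ≠ 0 := fun h => hc (hinj (by rw [← hc'def, h, map_zero]))
    obtain ⟨a1, ha1⟩ := IsAlgClosed.exists_root
      (Polynomial.X ^ 3 + Polynomial.X + Polynomial.C c' : Polynomial K)
      (by
        have hdeg : (Polynomial.X ^ 3 + Polynomial.X + Polynomial.C c' : Polynomial K).degree = 3 := by
          compute_degree!
        rw [hdeg]; decide)
    have h1 : a1 ^ 3 + a1 + c' = 0 := by
      simp only [Polynomial.IsRoot, Polynomial.eval_add, Polynomial.eval_pow,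
        Polynomial.eval_X, Polynomial.eval_C] at ha1
      linear_combination ha1
    obtain ⟨a2, ha2⟩ := IsAlgClosed.exists_root
      (Polynomial.X ^ 2 + Polynomial.C a1 * Polynomial.X + Polynomial.C (a1 ^ 2 + 1) : Polynomial K)
      (by
        have hdeg : (Polynomial.X ^ 2 + Polynomial.C a1 * Polynomial.X
            + Polynomial.C (a1 ^ 2 + 1) : Polynomial K).degree = 2 := by
          compute_degree!
        rw [hdeg]; decide)
    have hq2 : a2 ^ 2 + a1 * a2 + a1 ^ 2 + 1 = 0 := by
      simp only [Polynomial.IsRoot, Polynomial.eval_add, Polynomial.eval_pow,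
        Polynomial.eval_mul, Polynomial.eval_X, Polynomial.eval_C] at ha2
      linear_combination ha2
    have ha1_0 : a1 ≠ 0 := by
      rintro rfl
      apply hc'
      linear_combination h1
    have ha1_1 : a1 ≠ 1 := by
      rintro rfl
      apply hc'
      linear_combination h1 - twoK
    have hne21 : a2 ≠ a1 := by
      intro h
      rw [h] at hq2
      have hsq : (a1 + 1) ^ 2 = 0 := by linear_combination hq2 + (a1 - a1 ^ 2) * twoK
      exact ha1_1 (char2_eq_of_add_eq_zero ((pow_eq_zero_iff two_ne_zero).mp hsq))
    have ha2_0 : a2 ≠ 0 := by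
      rintro rfl
      have hsq : (a1 + 1) ^ 2 = 0 := by linear_combination hq2 + a1 * twoK
      exact ha1_1 (char2_eq_of_add_eq_zero ((pow_eq_zero_iff two_ne_zero).mp hsq))
    have h2 : a2 ^ 3 + a2 + c' = 0 := by
      linear_combination h1 + (a2 + a1) * hq2
        + (-a1 - a1 * a2 ^ 2 - a1 ^ 2 * a2 - a1 ^ 3) * twoK
    have ha2_1 : a2 ≠ 1 := by
      rintro rfl
      apply hc'
      linear_combination h2 - twoK
    have h3r : (a1 + a2) ^ 3 + (a1 + a2) + c' = 0 := by
      linear_combination h1 + a2 * hq2 + (a1 * a2 ^ 2 + a1 ^ 2 * a2) * twoK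
    have h3K : a1 * a2 * (a1 + a2) = c' := by
      linear_combination h1 + a1 * hq2 + (-c' - a1 - a1 ^ 3) * twoK
    have hform := brs_eval (ZMod.castHom (dvd_refl 2) K) c' a1 a2 h1 h2 h3K n
    have hhom : (algebraMap F K).comp (ZMod.castHom (dvd_refl 2) F)
        = ZMod.castHom (dvd_refl 2) K := RingHom.ext_zmod _ _
    have htrans := Polynomial.hom_eval₂ (brsP (n + 1))
      (ZMod.castHom (dvd_refl 2) F) (algebraMap F K) c
    rw [hhom, hq, map_zero] at htrans
    have hE0 : (a2 ^ 2 + a2) * a1 ^ 2 ^ n + (a1 ^ 2 + a1) * a2 ^ 2 ^ n = 0 := by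
      rw [← hform, ← htrans]
    have hu : (a1 ^ 2 ^ n) ^ 2 = a1 ^ 2 ^ (n + 1) := by rw [← pow_mul, ← pow_succ]
    have hv : (a2 ^ 2 ^ n) ^ 2 = a2 ^ 2 ^ (n + 1) := by rw [← pow_mul, ← pow_succ]
    have hE2 : (a2 ^ 2 + a2) ^ 2 * a1 ^ 2 ^ (n + 1)
        + (a1 ^ 2 + a1) ^ 2 * a2 ^ 2 ^ (n + 1) = 0 := by
      have hstep : ((a2 ^ 2 + a2) * a1 ^ 2 ^ n + (a1 ^ 2 + a1) * a2 ^ 2 ^ n) ^ 2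
          = (a2 ^ 2 + a2) ^ 2 * ((a1 ^ 2 ^ n) ^ 2) + (a1 ^ 2 + a1) ^ 2 * ((a2 ^ 2 ^ n) ^ 2) := by
        linear_combination ((a2 ^ 2 + a2) * (a1 ^ 2 + a1) * a1 ^ 2 ^ n * a2 ^ 2 ^ n) * twoK
      rw [hE0, hu, hv] at hstep
      simpa using hstep.symm
    have hNne : (2 : ℕ) ^ (n + 1) ≠ 0 := by positivity
    have c'pow : c' ^ 2 ^ (n + 1) = c' := by
      rw [hc'def, ← map_pow, ← hF, FiniteField.pow_card]
    have hroot_t : ∀ t : K, t ^ 3 + t + c' = 0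
        → (t ^ 2 ^ (n + 1)) ^ 3 + t ^ 2 ^ (n + 1) + c' = 0 := by
      intro t ht
      have e3 : (t ^ 2 ^ (n + 1)) ^ 3 = (t ^ 3) ^ 2 ^ (n + 1) := by
        rw [← pow_mul, ← pow_mul, mul_comm]
      rw [e3]
      calc (t ^ 3) ^ 2 ^ (n + 1) + t ^ 2 ^ (n + 1) + c'
          = (t ^ 3 + t + c') ^ 2 ^ (n + 1) := by
            rw [add_pow_char_pow, add_pow_char_pow, c'pow]
        _ = 0 := by rw [ht]; exact zero_pow hNne
    have htr1 := hroot_t a1 h1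
    have htr2 := hroot_t a2 h2
    have ht12 : a1 ^ 2 ^ (n + 1) ≠ a2 ^ 2 ^ (n + 1) := by
      intro h
      have hz : (a1 + a2) ^ 2 ^ (n + 1) = 0 := by
        rw [add_pow_char_pow, h]
        linear_combination (a2 ^ 2 ^ (n + 1)) * twoK
      have := (pow_eq_zero_iff hNne).mp hz
      exact hne21 (char2_eq_of_add_eq_zero this).symm
    have hmem : ∀ t : K, t ^ 3 + t + c' = 0 → t = a1 ∨ t = a2 ∨ t = a1 + a2 := by
      intro t ht
      have hfac : (t + a1) * (t + a2) * (t + (a1 + a2)) = 0 := by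
        linear_combination ht + h1 + (t + a1) * hq2
          + (-t - c' + a2 * t ^ 2 - a1 + a1 * t ^ 2 + a1 * a2 * t - a1 ^ 3) * twoK
      rcases mul_eq_zero.mp hfac with h | h
      · rcases mul_eq_zero.mp h with h' | h'
        · exact Or.inl (char2_eq_of_add_eq_zero h')
        · exact Or.inr (Or.inl (char2_eq_of_add_eq_zero h'))
      · exact Or.inr (Or.inr (char2_eq_of_add_eq_zero h))
    -- follow-up helper : if a2 = a1 + 1 then contradiction
    have hfollow : a2 ≠ a1 + 1 := by
      intro hb
      have hfa : a1 ^ 2 + a1 = 0 := by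
        linear_combination h1 + h2 + (a2 + a2 ^ 2 + a1 * a2 + a1 ^ 2) * hb
          + (-c' - a2 ^ 3 + a1 * a2 + a1 ^ 2) * twoK
      have : a1 * (a1 + 1) = 0 := by linear_combination hfa
      rcases mul_eq_zero.mp this with h' | h'
      · exact ha1_0 h'
      · exact ha1_1 (char2_eq_of_add_eq_zero h')
    have hfollow' : a1 ≠ a2 + 1 := by
      intro hb
      have hfa : a2 ^ 2 + a2 = 0 := by
        linear_combination h2 + h1 + (a1 + a1 ^ 2 + a2 * a1 + a2 ^ 2) * hb
          + (-c' - a1 ^ 3 + a2 * a1 + a2 ^ 2) * twoK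
      have : a2 * (a2 + 1) = 0 := by linear_combination hfa
      rcases mul_eq_zero.mp this with h' | h'
      · exact ha2_0 h'
      · exact ha2_1 (char2_eq_of_add_eq_zero h')
    have ha3_0 : a1 + a2 ≠ 0 := fun h => hne21 (char2_eq_of_add_eq_zero h).symm
    rcases hmem _ htr1 with e1 | e1 | e1 <;> rcases hmem _ htr2 with e2 | e2 | e2
    · -- t1 = a1, t2 = a1 : both equal a1, contradiction with ht12
      exact absurd (e1.trans e2.symm) ht12
    · -- good case t1 = a1, t2 = a2
      obtain ⟨x, hx⟩ := fixed_point (n + 1) hm hF a1 e1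
      obtain ⟨y, hy⟩ := fixed_point (n + 1) hm hF a2 e2
      refine ⟨x, y, x + y, ?_, ?_, ?_, ?_, ?_, ?_⟩
      · intro h
        have : a1 = a2 := by rw [← hx, ← hy, h]
        exact hne21 this.symm
      · intro h
        apply ha2_0
        have := congrArg (algebraMap F K) h
        rw [map_add, hx, hy] at this
        linear_combination -this
      · intro h
        apply ha1_0
        have := congrArg (algebraMap F K) h
        rw [map_add, hx, hy] at this
        linear_combination -this
      · apply hinj
        rw [map_zero, map_add, map_add, map_pow, hx, ← hc'def]
        exact h1
      · apply hinj
        rw [map_zero, map_add, map_add, map_pow, hy, ← hc'def]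
        exact h2
      · apply hinj
        rw [map_zero, map_add, map_add, map_pow, map_add, hx, hy, ← hc'def]
        exact h3r
    · -- t1 = a1, t2 = a1 + a2 : case (a, a3)
      rw [e1, e2] at hE2
      exfalso
      have hT : (a1 * (a1 + 1) * (a2 + a1 + 1)) ^ 2 = 0 := by
        linear_combination (c' + a2 + a1 * a2 ^ 2 + a1 ^ 2 * a2) * hE2
          + (c' + a2 ^ 3 + a2 ^ 5 + a1 + a1 ^ 2 * c' + a1 ^ 2 * a2 + a1 ^ 2 * a2 ^ 3 + a1 ^ 3
            + a1 ^ 4 * a2) * h1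
          + (a2 ^ 2 * c' + a1 * a2 * c' + a1 ^ 2 * a2 ^ 3) * h2
          + (c' ^ 2) * hq2
          + (-c' ^ 2 - a2 ^ 2 * c' ^ 2 - a2 ^ 3 * c' - a2 ^ 5 * c' - a1 * c' - a1 * a2 * c' ^ 2
            - a1 * a2 ^ 2 * c' - a1 * a2 ^ 3 - a1 * a2 ^ 3 * c' - a1 * a2 ^ 4 - a1 * a2 ^ 4 * c'
            - a1 * a2 ^ 5 - a1 ^ 2 * c' ^ 2 + a1 ^ 2 * a2 - a1 ^ 2 * a2 * c' - a1 ^ 2 * a2 ^ 3 * c'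
            - a1 ^ 2 * a2 ^ 4 - a1 ^ 2 * a2 ^ 5 - a1 ^ 2 * a2 ^ 6 + 2 * a1 ^ 3 - 2 * a1 ^ 3 * c'
            + 2 * a1 ^ 3 * a2 - a1 ^ 3 * a2 * c' - 2 * a1 ^ 3 * a2 ^ 3 - a1 ^ 3 * a2 ^ 4
            - a1 ^ 3 * a2 ^ 5 + 2 * a1 ^ 4 - a1 ^ 4 * c' + 2 * a1 ^ 4 * a2 - a1 ^ 4 * a2 * c'
            - a1 ^ 4 * a2 ^ 2 - a1 ^ 4 * a2 ^ 3 + 2 * a1 ^ 5 - a1 ^ 5 * c' - a1 ^ 5 * a2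
            - 2 * a1 ^ 5 * a2 ^ 2 - a1 ^ 5 * a2 ^ 3 - a1 ^ 6 * a2 - a1 ^ 6 * a2 ^ 2
            - a1 ^ 7 * a2) * twoK
      have := (pow_eq_zero_iff two_ne_zero).mp hT
      rcases mul_eq_zero.mp this with h' | h'
      · rcases mul_eq_zero.mp h' with h'' | h''
        · exact ha1_0 h''
        · exact ha1_1 (char2_eq_of_add_eq_zero h'')
      · refine hfollow (char2_eq_of_add_eq_zero ?_)
        linear_combination h'
    · -- t1 = a2, t2 = a1 : case (b,a)
      rw [e1, e2] at hE2
      exfalso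
      have hT : c' * (a1 + a2) ^ 2 = 0 := by
        linear_combination hE2 + a1 ^ 2 * h1 + a2 ^ 2 * h2
          + (-a2 ^ 3 - a2 ^ 4 - a2 ^ 5 + a1 * a2 * c' - a1 ^ 3 - a1 ^ 4 - a1 ^ 5) * twoK
      rcases mul_eq_zero.mp hT with h' | h'
      · exact hc' h'
      · exact ha3_0 ((pow_eq_zero_iff two_ne_zero).mp h')
    · exact absurd (e1.trans e2.symm) ht12
    · -- t1 = a2, t2 = a1 + a2 : case (b, a3) : c' * a1 = 0
      rw [e1, e2] at hE2
      exfalso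
      have hT : c' * a1 = 0 := by
        linear_combination (c' + a1 + a1 * a2 ^ 2 + a1 ^ 2 * a2) * hE2
          + (c' + a1 ^ 2 * c' + a1 ^ 2 * a2 + a1 ^ 2 * a2 ^ 3 + a1 ^ 3 + a1 ^ 4 * a2) * h1
          + (a2 ^ 2 * c' + a1 * a2 * c' + a1 * a2 ^ 2 + a1 * a2 ^ 4 + a1 ^ 2 * a2 ^ 3) * h2
          + (c' ^ 2) * hq2
          + (-c' ^ 2 - a2 ^ 2 * c' ^ 2 - a2 ^ 3 * c' - a2 ^ 4 * c' - a2 ^ 5 * c'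
            - a1 * a2 * c' ^ 2 - a1 * a2 ^ 2 * c' - a1 * a2 ^ 3 - a1 * a2 ^ 4 - a1 * a2 ^ 4 * c'
            - 2 * a1 * a2 ^ 5 - a1 * a2 ^ 6 - a1 * a2 ^ 7 - a1 ^ 2 * c' ^ 2 - a1 ^ 2 * a2 * c'
            - a1 ^ 2 * a2 ^ 3 * c' - a1 ^ 2 * a2 ^ 4 - a1 ^ 2 * a2 ^ 5 - a1 ^ 2 * a2 ^ 6
            - 2 * a1 ^ 3 * c' - a1 ^ 3 * a2 - a1 ^ 3 * a2 * c' - a1 ^ 3 * a2 ^ 3 - a1 ^ 4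
            - a1 ^ 4 * c' - a1 ^ 4 * a2 - a1 ^ 4 * a2 * c' - a1 ^ 4 * a2 ^ 2 - a1 ^ 4 * a2 ^ 3
            - a1 ^ 5 - a1 ^ 5 * c' - 2 * a1 ^ 5 * a2 - 2 * a1 ^ 5 * a2 ^ 2 - a1 ^ 5 * a2 ^ 3
            - a1 ^ 6 - a1 ^ 6 * a2 - a1 ^ 6 * a2 ^ 2 - a1 ^ 7 * a2) * twoK
      rcases mul_eq_zero.mp hT with h' | h'
      · exact hc' h'
      · exact ha1_0 h'
    · -- t1 = a1 + a2, t2 = a1 : case (a3, a) : c' * a2 = 0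
      rw [e1, e2] at hE2
      exfalso
      have hT : c' * a2 = 0 := by
        linear_combination (c' + a2 + a1 * a2 ^ 2 + a1 ^ 2 * a2) * hE2
          + (a2 ^ 2 * c' + a2 ^ 3 + a2 ^ 5 + a1 * a2 * c' + a1 ^ 2 * c' + a1 ^ 2 * a2
            + a1 ^ 3 * a2 ^ 2 + a1 ^ 4 * a2) * h1
          + (c' + a2 ^ 3 + a1 * a2 ^ 4) * h2
          + (c' ^ 2) * hq2
          + (-c' ^ 2 - a2 ^ 2 * c' ^ 2 - 2 * a2 ^ 3 * c' - a2 ^ 4 - a2 ^ 4 * c' - a2 ^ 5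
            - a2 ^ 5 * c' - a2 ^ 6 - a1 * a2 * c' ^ 2 - a1 * a2 ^ 2 * c' - a1 * a2 ^ 3
            - a1 * a2 ^ 3 * c' - a1 * a2 ^ 4 - a1 * a2 ^ 4 * c' - 2 * a1 * a2 ^ 5 - a1 * a2 ^ 6
            - a1 * a2 ^ 7 - a1 ^ 2 * c' ^ 2 - a1 ^ 2 * a2 * c' - a1 ^ 2 * a2 ^ 4
            - 2 * a1 ^ 2 * a2 ^ 5 - a1 ^ 2 * a2 ^ 6 - a1 ^ 3 * c' - a1 ^ 3 * a2
            - a1 ^ 3 * a2 ^ 2 * c' - a1 ^ 3 * a2 ^ 3 - a1 ^ 3 * a2 ^ 4 - a1 ^ 3 * a2 ^ 5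
            - a1 ^ 4 * c' - a1 ^ 4 * a2 - a1 ^ 4 * a2 * c' - a1 ^ 4 * a2 ^ 2 - a1 ^ 5 * c'
            - 2 * a1 ^ 5 * a2 - a1 ^ 5 * a2 ^ 2 - a1 ^ 6 * a2 - a1 ^ 6 * a2 ^ 2
            - a1 ^ 7 * a2) * twoK
      rcases mul_eq_zero.mp hT with h' | h'
      · exact hc' h'
      · exact ha2_0 h'
    · -- t1 = a1 + a2, t2 = a2 : case (a3, b)
      rw [e1, e2] at hE2
      exfalso
      have hT : (a2 * (a2 + 1) * (a1 + a2 + 1)) ^ 2 = 0 := by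
        linear_combination (a2 + a2 ^ 3 + a1 + a1 * a2 ^ 2 + a1 ^ 2 * a2) * hE2
          + (a2 ^ 2 * c' + a2 ^ 3 + a2 ^ 5 + a1 * a2 ^ 2 + a1 * a2 ^ 4 + a1 ^ 2 * a2
            + a1 ^ 2 * a2 ^ 3 + a1 ^ 3 * a2 ^ 2) * h1
          + (c' + a2 + a2 ^ 5 + a1 * a2 * c' + a1 * a2 ^ 2 + a1 ^ 2 * c') * h2
          + (c' ^ 2) * hq2
          + (-c' ^ 2 - a2 * c' - a2 ^ 2 * c' ^ 2 + 2 * a2 ^ 3 - a2 ^ 3 * c' + 2 * a2 ^ 4 + a2 ^ 5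
            - a2 ^ 5 * c' - a2 ^ 6 - a2 ^ 7 - a2 ^ 8 - a1 * a2 * c' ^ 2 + a1 * a2 ^ 2
            - 2 * a1 * a2 ^ 2 * c' + a1 * a2 ^ 3 + a1 * a2 ^ 4 - a1 * a2 ^ 4 * c'
            - 2 * a1 * a2 ^ 5 - 2 * a1 * a2 ^ 6 - a1 * a2 ^ 7 - a1 ^ 2 * c' ^ 2
            - a1 ^ 2 * a2 * c' - a1 ^ 2 * a2 ^ 2 - a1 ^ 2 * a2 ^ 3 * c' - 2 * a1 ^ 2 * a2 ^ 4
            - 2 * a1 ^ 2 * a2 ^ 5 - a1 ^ 2 * a2 ^ 6 - a1 ^ 3 * a2 - a1 ^ 3 * a2 ^ 2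
            - a1 ^ 3 * a2 ^ 2 * c' - 2 * a1 ^ 3 * a2 ^ 3 - 2 * a1 ^ 3 * a2 ^ 4 - a1 ^ 3 * a2 ^ 5
            - a1 ^ 4 * a2 - 2 * a1 ^ 4 * a2 ^ 2 - a1 ^ 4 * a2 ^ 3 - a1 ^ 4 * a2 ^ 4 - a1 ^ 5 * a2
            - a1 ^ 5 * a2 ^ 2 - a1 ^ 5 * a2 ^ 3 - a1 ^ 6 * a2 ^ 2) * twoK
      have := (pow_eq_zero_iff two_ne_zero).mp hT
      rcases mul_eq_zero.mp this with h' | h'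
      · rcases mul_eq_zero.mp h' with h'' | h''
        · exact ha2_0 h''
        · exact ha2_1 (char2_eq_of_add_eq_zero h'')
      · refine hfollow' (char2_eq_of_add_eq_zero ?_)
        linear_combination h'
    · -- t1 = a1 + a2 = t2
      exact absurd (e1.trans e2.symm) ht12

theorem stmt_19 (m : ℕ) (hm : 0 < m)
    (F : Type*) [Field F] [Fintype F] [CharP F 2]
    (hF : Fintype.card F = 2 ^ m)
    (α β s : F) (hα : α ≠ 0) (hβ : β ≠ 0) (hs : s ^ 2 = α ^ 3) :
    (∃ x y z : F, x ≠ y ∧ x ≠ z ∧ y ≠ z ∧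
      x ^ 3 + α * x + β = 0 ∧ y ^ 3 + α * y + β = 0 ∧ z ^ 3 + α * z + β = 0) ↔
    Polynomial.eval₂ (ZMod.castHom (dvd_refl 2) F) (β / s) (brsP m) = 0 := by
  have twoF : (2 : F) = 0 := two0
  have hchar2 : ringChar F = 2 := ringChar.eq F 2
  obtain ⟨u, hu⟩ := FiniteField.isSquare_of_char_two hchar2 α
  have hu0 : u ≠ 0 := fun h => hα (by rw [hu, h, mul_zero])
  have hs0 : s ≠ 0 := by
    intro h
    apply hα
    apply (pow_eq_zero_iff (three_ne_zero)).mp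
    rw [← hs, h]
    ring
  have hu3 : u ^ 3 = s := by
    have hsq : (u ^ 3 + s) ^ 2 = 0 := by
      linear_combination hs + (α ^ 2 + α * u ^ 2 + u ^ 4) * hu + (u ^ 6 + u ^ 3 * s) * twoF
    exact char2_eq_of_add_eq_zero ((pow_eq_zero_iff two_ne_zero).mp hsq)
  set c := β / s with hcdef
  have hc : c ≠ 0 := div_ne_zero hβ hs0
  have hu30 : u ^ 3 ≠ 0 := pow_ne_zero 3 hu0
  have hcu : u ^ 3 * c = β := by
    rw [hcdef, hu3]
    field_simp
  have hkey : ∀ w : F, (u * w) ^ 3 + α * (u * w) + β = u ^ 3 * (w ^ 3 + w + c) := by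
    intro w
    linear_combination u * w * hu - hcu
  have hiff : ∀ w : F, w ^ 3 + w + c = 0 ↔ (u * w) ^ 3 + α * (u * w) + β = 0 := by
    intro w
    rw [hkey w]
    constructor
    · intro h; rw [h, mul_zero]
    · intro h; exact (mul_eq_zero.mp h).resolve_left hu30
  rw [← core m hm F hF c hc]
  constructor
  · rintro ⟨x, y, z, hxy, hxz, hyz, hx, hy, hz⟩
    have hiff' : ∀ w : F, (u⁻¹ * w) ^ 3 + (u⁻¹ * w) + c = 0 ↔ w ^ 3 + α * w + β = 0 := by
      intro w
      have := hiff (u⁻¹ * w)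
      rwa [mul_inv_cancel_left₀ hu0] at this
    refine ⟨u⁻¹ * x, u⁻¹ * y, u⁻¹ * z, ?_, ?_, ?_,
      (hiff' x).mpr hx, (hiff' y).mpr hy, (hiff' z).mpr hz⟩
    · exact fun h => hxy (mul_left_cancel₀ (inv_ne_zero hu0) h)
    · exact fun h => hxz (mul_left_cancel₀ (inv_ne_zero hu0) h)
    · exact fun h => hyz (mul_left_cancel₀ (inv_ne_zero hu0) h)
  · rintro ⟨x, y, z, hxy, hxz, hyz, hx, hy, hz⟩
    exact ⟨u * x, u * y, u * z,
      fun h => hxy (mul_left_cancel₀ hu0 h),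
      fun h => hxz (mul_left_cancel₀ hu0 h),
      fun h => hyz (mul_left_cancel₀ hu0 h),
      (hiff x).mp hx, (hiff y).mp hy, (hiff z).mp hz⟩
end
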